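/- Let R be a commutative ring, let Q(R) be its total ring of fractions, and let T be an R-subalgebra of Q(R). Suppose V is a non-empty subset of T such that T = R[V] and such that fg ∈ R for all f, g ∈ V. Then R is strictly closed in T, i.e. R = {α ∈ T : α ⊗ 1 = 1 ⊗ α in T ⊗_R T}. -/

import Mathlib

open scoped TensorProduct

set_option synthInstance.maxHeartbeats 1000000 in
set_option maxHeartbeats 1000000 in
/-- Let `R` be a commutative ring, `Q(R)` its total ring of fractions
(`FractionRing R`), and `T` an `R`-subalgebra of `Q(R)`. If `V ⊆ T` is a non-empty subset
with `T = R[V]` and `fg ∈ R` for all `f, g ∈ V`, then `R` is strictly closed in `T`, i.e.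
every `α ∈ T` with `α ⊗ 1 = 1 ⊗ α` in `T ⊗_R T` comes from `R`. -/
theorem strictly_closed_of_products_in_base
    (R : Type*) [CommRing R] (T : Subalgebra R (FractionRing R))
    (V : Set (FractionRing R)) (hVne : V.Nonempty)
    (hVT : (V : Set (FractionRing R)) ⊆ (T : Set (FractionRing R)))
    (hgen : T = Algebra.adjoin R V)
    (hmul : ∀ f ∈ V, ∀ g ∈ V, f * g ∈ (algebraMap R (FractionRing R)).range) :
    ∀ α : T, α ⊗ₜ[R] (1 : T) = (1 : T) ⊗ₜ[R] α → α ∈ (algebraMap R T).range := by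
  classical
  set R₀ : Submodule R (FractionRing R) :=
    LinearMap.range (Algebra.linearMap R (FractionRing R)) with hR₀
  set W : Submodule R (FractionRing R) := Submodule.span R V with hW
  -- products of two elements of W land in R₀
  have hWW : ∀ b ∈ W, ∀ b' ∈ W, b * b' ∈ R₀ := by
    have h1 : W * W ≤ R₀ := by
      rw [hW, Submodule.span_mul_span, Submodule.span_le]
      rintro _ ⟨f, hf, g, hg, rfl⟩
      obtain ⟨r, hr⟩ := hmul f hf g hg
      exact ⟨r, hr⟩
    intro b hb b' hb'
    exact h1 (Submodule.mul_mem_mul hb hb')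
  -- every element of T lies in R₀ ⊔ W
  have hT : ∀ x : FractionRing R, x ∈ T → x ∈ R₀ ⊔ W := by
    intro x hx
    rw [hgen] at hx
    induction hx using Algebra.adjoin_induction with
    | mem v hv =>
        exact Submodule.mem_sup_right (Submodule.subset_span hv)
    | algebraMap r =>
        exact Submodule.mem_sup_left ⟨r, rfl⟩
    | add x y hx hy ihx ihy => exact add_mem ihx ihy
    | mul x y hx hy ihx ihy =>
        obtain ⟨a, ha, b, hb, rfl⟩ := Submodule.mem_sup.mp ihx
        obtain ⟨a', ha', b', hb', rfl⟩ := Submodule.mem_sup.mp ihy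
        obtain ⟨r, rfl⟩ := ha
        obtain ⟨r', rfl⟩ := ha'
        have e : (Algebra.linearMap R (FractionRing R) r + b)
              * (Algebra.linearMap R (FractionRing R) r' + b')
            = (Algebra.linearMap R (FractionRing R) r
                * Algebra.linearMap R (FractionRing R) r' + b * b')
              + (r • b' + r' • b) := by
          simp only [Algebra.linearMap_apply, Algebra.smul_def]
          ring
        rw [e]
        refine add_mem (Submodule.mem_sup_left (add_mem ?_ ?_))
          (Submodule.mem_sup_right (add_mem ?_ ?_))
        · exact ⟨r * r', by simp⟩
        · exact hWW b hb b' hb'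
        · exact Submodule.smul_mem _ _ hb'
        · exact Submodule.smul_mem _ _ hb
  -- the presentation map π : R × W → FractionRing R
  set π : (R × W) →ₗ[R] FractionRing R :=
    (Algebra.linearMap R (FractionRing R)).coprod W.subtype with hπ
  have hπ_apply : ∀ (r : R) (w : W),
      π (r, w) = algebraMap R (FractionRing R) r + (w : FractionRing R) := by
    intro r w; rfl
  -- the basic linear map ψ₀ : T → Q ⧸ R₀
  set ψ₀ : T →ₗ[R] (FractionRing R ⧸ R₀) :=
    R₀.mkQ ∘ₗ (Subalgebra.toSubmodule T).subtype with hψ₀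
  -- Φ (r, w) = (x ↦ mkQ (r • x))
  set Φ : (R × W) →ₗ[R] (T →ₗ[R] (FractionRing R ⧸ R₀)) :=
    (LinearMap.toSpanSingleton R (T →ₗ[R] (FractionRing R ⧸ R₀)) ψ₀)
      ∘ₗ LinearMap.fst R R W with hΦ
  have hΦ_apply : ∀ (r : R) (w : W) (x : T),
      Φ (r, w) x = R₀.mkQ (r • (x : FractionRing R)) := by
    intro r w x
    simp only [hΦ, hψ₀, LinearMap.comp_apply, LinearMap.fst_apply,
      LinearMap.toSpanSingleton_apply, LinearMap.smul_apply, Submodule.mkQ_apply,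
      Submodule.subtype_apply, Submodule.Quotient.mk_smul]
    rfl
  have hker : LinearMap.ker π ≤ LinearMap.ker Φ := by
    rintro ⟨r, w⟩ h
    have h0 : algebraMap R (FractionRing R) r + (w : FractionRing R) = 0 := h
    rw [LinearMap.mem_ker]
    ext x
    rw [hΦ_apply]
    simp only [LinearMap.zero_apply]
    rw [Submodule.mkQ_apply, Submodule.Quotient.mk_eq_zero]
    obtain ⟨a, ha, b, hb, hab⟩ :=
      Submodule.mem_sup.mp (hT (x : FractionRing R) x.2)
    have hx : r • (x : FractionRing R)
        = r • a + (algebraMap R (FractionRing R) r) * b := by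
      rw [← hab, smul_add, show r • b = algebraMap R (FractionRing R) r * b
        from Algebra.smul_def r b]
    rw [hx]
    refine add_mem (Submodule.smul_mem _ _ ha) ?_
    have hmr : algebraMap R (FractionRing R) r = -(w : FractionRing R) :=
      eq_neg_of_add_eq_zero_left h0
    rw [hmr, neg_mul]
    exact neg_mem (hWW _ w.2 _ hb)
  -- descend Φ to the range of π
  set Φbar : LinearMap.range π →ₗ[R] (T →ₗ[R] (FractionRing R ⧸ R₀)) :=
    ((LinearMap.ker π).liftQ Φ hker) ∘ₗ
      (LinearMap.quotKerEquivRange π).symm.toLinearMap with hΦbar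
  have hΦbar_apply : ∀ (p : R × W) (h : π p ∈ LinearMap.range π),
      Φbar ⟨π p, h⟩ = Φ p := by
    intro p h
    have h1 : (LinearMap.quotKerEquivRange π).symm ⟨π p, h⟩
        = Submodule.Quotient.mk p := π.quotKerEquivRange_symm_apply_image p h
    calc Φbar ⟨π p, h⟩
        = (LinearMap.ker π).liftQ Φ hker
            ((LinearMap.quotKerEquivRange π).symm ⟨π p, h⟩) := rfl
      _ = Φ p := by rw [h1, Submodule.liftQ_apply]
  -- every element of T is in the range of π
  have hrange : ∀ x : T, (x : FractionRing R) ∈ LinearMap.range π := by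
    intro x
    obtain ⟨a, ha, b, hb, hab⟩ :=
      Submodule.mem_sup.mp (hT (x : FractionRing R) x.2)
    obtain ⟨r, rfl⟩ := ha
    exact ⟨(r, ⟨b, hb⟩), hab⟩
  set incl : T →ₗ[R] LinearMap.range π :=
    LinearMap.codRestrict _ ((Subalgebra.toSubmodule T).subtype) hrange with hincl
  have hΦbar_incl : ∀ (x : T) (r : R) (w : W),
      (x : FractionRing R) = algebraMap R (FractionRing R) r + (w : FractionRing R) →
      Φbar (incl x) = Φ (r, w) := by
    intro x r w hx
    have h2 : incl x = ⟨π (r, w), LinearMap.mem_range_self π _⟩ := by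
      apply Subtype.ext
      exact hx.trans (hπ_apply r w).symm
    rw [h2, hΦbar_apply]
  -- the bilinear map B
  set B : T →ₗ[R] T →ₗ[R] (FractionRing R ⧸ R₀) := (Φbar ∘ₗ incl).flip with hB
  intro α hα
  have key := congrArg (TensorProduct.lift B) hα
  rw [TensorProduct.lift.tmul, TensorProduct.lift.tmul] at key
  -- key : B α 1 = B 1 α
  have hB1 : Φbar (incl 1) = Φ (1, 0) := by
    apply hΦbar_incl
    simp
  obtain ⟨a, ha, b, hb, hab⟩ :=
    Submodule.mem_sup.mp (hT (α : FractionRing R) α.2)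
  obtain ⟨rα, hrα⟩ := ha
  have hBα : Φbar (incl α) = Φ (rα, ⟨b, hb⟩) := by
    apply hΦbar_incl
    rw [← hab, ← hrα]; rfl
  have key2 : R₀.mkQ ((1 : R) • (α : FractionRing R))
      = R₀.mkQ (rα • ((1 : T) : FractionRing R)) := by
    have e1 : B α (1 : T) = R₀.mkQ ((1 : R) • (α : FractionRing R)) := by
      rw [hB, LinearMap.flip_apply, LinearMap.comp_apply, hB1, hΦ_apply]
    have e2 : B (1 : T) α = R₀.mkQ (rα • ((1 : T) : FractionRing R)) := by
      rw [hB, LinearMap.flip_apply, LinearMap.comp_apply, hBα, hΦ_apply]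
    rw [← e1, ← e2, key]
  have hmem : (α : FractionRing R) ∈ R₀ := by
    have h1 : ((α : FractionRing R) - rα • ((1 : T) : FractionRing R)) ∈ R₀ := by
      rw [← Submodule.Quotient.mk_eq_zero]
      have h3 := key2
      simp only [one_smul, Submodule.mkQ_apply] at h3
      rw [Submodule.Quotient.mk_sub, h3, sub_self]
    have h2 : rα • ((1 : T) : FractionRing R) ∈ R₀ := by
      have h4 : rα • ((1 : T) : FractionRing R)
          = algebraMap R (FractionRing R) rα := by
        simp [Algebra.smul_def]
      rw [h4]; exact ⟨rα, rfl⟩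
    have h5 := add_mem h1 h2
    simpa using h5
  obtain ⟨r', hr'⟩ := hmem
  exact ⟨r', Subtype.ext (by simpa using hr')⟩
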